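/- If f: Dⁿ → ℝ is α-bisubmodular and μ is a probability distribution on Dⁿ with marginal x attaining the minimum of Σ_a λ(a)f(a) over all distributions λ with marginal x, and whose support is not a chain, then there exists another minimizing distribution ν with marginal x such that Σ_a ν(a)z(a)² > Σ_a μ(a)z(a)², where z(a) is the number of zero coordinates of a. -/

import Mathlib

open Finset

/-- The three-element domain `D = {-α, 0, 1}`, abstractly. -/
inductive D3 : Type
  | neg : D3
  | zero : D3
  | one : D3
deriving DecidableEq

instance : Fintype D3 :=
  ⟨{D3.neg, D3.zero, D3.one}, by rintro (_ | _ | _) <;> simp⟩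

namespace D3

/-- The embedding of `D3` into `ℝ` sending `neg ↦ -α`, `zero ↦ 0`, `one ↦ 1`. -/
def emb (α : ℝ) : D3 → ℝ
  | neg => -α
  | zero => 0
  | one => 1

/-- The partial order `0 ≺ 1`, `0 ≺ -α`, with `1` and `-α` incomparable. -/
instance : PartialOrder D3 where
  le x y := x = y ∨ x = zero
  le_refl x := Or.inl rfl
  le_trans x y z hxy hyz := by
    rcases hxy with rfl | rfl
    · exact hyz
    · exact Or.inr rfl
  le_antisymm x y hxy hyx := by
    rcases hxy with rfl | rfl
    · rfl
    · rcases hyx with rfl | rfl <;> rfl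

/-- `∧₀` : `1 ∧₀ (-α) = (-α) ∧₀ 1 = 0`, and min w.r.t. `≺` otherwise. -/
def meet0 (x y : D3) : D3 := if x = y then x else zero

/-- `∨₀` : `1 ∨₀ (-α) = (-α) ∨₀ 1 = 0`, and max w.r.t. `≺` otherwise. -/
def join0 (x y : D3) : D3 :=
  if x = y then x else if x = zero then y else if y = zero then x else zero

/-- `∨₁` : `1 ∨₁ (-α) = (-α) ∨₁ 1 = 1`, and max w.r.t. `≺` otherwise. -/
def join1 (x y : D3) : D3 :=
  if x = y then x else if x = zero then y else if y = zero then x else one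

end D3

/-- Componentwise `∧₀` on `Dⁿ`. -/
def vmeet0 {n : ℕ} (a b : Fin n → D3) : Fin n → D3 := fun i => D3.meet0 (a i) (b i)

/-- Componentwise `∨₀` on `Dⁿ`. -/
def vjoin0 {n : ℕ} (a b : Fin n → D3) : Fin n → D3 := fun i => D3.join0 (a i) (b i)

/-- Componentwise `∨₁` on `Dⁿ`. -/
def vjoin1 {n : ℕ} (a b : Fin n → D3) : Fin n → D3 := fun i => D3.join1 (a i) (b i)

/-- `lam` is a probability distribution on `Dⁿ`. -/
def IsDist (n : ℕ) (lam : (Fin n → D3) → ℝ) : Prop :=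
  (∀ a, 0 ≤ lam a ∧ lam a ≤ 1) ∧ ∑ a : Fin n → D3, lam a = 1

/-- `lam` has marginal vector `x`, i.e. `Σ_a lam(a)·a = x` in `ℝⁿ`. -/
def HasMarginal (α : ℝ) (n : ℕ) (lam : (Fin n → D3) → ℝ) (x : Fin n → ℝ) : Prop :=
  ∀ i, ∑ a : Fin n → D3, lam a * D3.emb α (a i) = x i

/-- The support of `lam` forms a chain w.r.t. the componentwise order on `Dⁿ`. -/
def ChainSupp (n : ℕ) (lam : (Fin n → D3) → ℝ) : Prop :=
  ∀ a b : Fin n → D3, lam a ≠ 0 → lam b ≠ 0 → a ≤ b ∨ b ≤ a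

/-- The box `[-α,1]ⁿ`. -/
def Box (α : ℝ) (n : ℕ) : Set (Fin n → ℝ) := {x | ∀ i, x i ∈ Set.Icc (-α) 1}

/-- `f : Dⁿ → ℝ` is α-bisubmodular. -/
def AlphaBisub (α : ℝ) (n : ℕ) (f : (Fin n → D3) → ℝ) : Prop :=
  ∀ a b : Fin n → D3,
    f (vmeet0 a b) + α * f (vjoin0 a b) + (1 - α) * f (vjoin1 a b) ≤ f a + f b

/-- Number of zero coordinates. -/
def zc {n : ℕ} (c : Fin n → D3) : ℕ := (Finset.univ.filter fun i => c i = D3.zero).card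

/-- The convex closure `f⁻(x)`. -/
noncomputable def cClos (α : ℝ) (n : ℕ) (f : (Fin n → D3) → ℝ) (x : Fin n → ℝ) : ℝ :=
  sInf {y | ∃ lam, IsDist n lam ∧ HasMarginal α n lam x ∧ y = ∑ a : Fin n → D3, lam a * f a}

section Helpers

lemma emb_id (α : ℝ) (x y : D3) :
    D3.emb α (D3.meet0 x y) + α * D3.emb α (D3.join0 x y)
      + (1 - α) * D3.emb α (D3.join1 x y) = D3.emb α x + D3.emb α y := by
  cases x <;> cases y <;> simp [D3.meet0, D3.join0, D3.join1, D3.emb] <;> ring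

lemma meet0_self : ∀ x y : D3, D3.meet0 x y = x → x = y ∨ x = D3.zero := by decide

lemma join0_left : ∀ x y : D3, D3.join0 x y = x → y = x ∨ y = D3.zero := by decide

lemma join0_right : ∀ x y : D3, D3.join0 x y = y → x = y ∨ x = D3.zero := by decide

lemma cnt_a (x y : D3) :
    (if x = D3.zero then (1:ℕ) else 0) =
      (if x = D3.zero ∧ y = D3.zero then (1:ℕ) else 0)
      + (if x = D3.zero ∧ ¬ y = D3.zero then (1:ℕ) else 0) := by
  cases x <;> cases y <;> decide

lemma cnt_b (x y : D3) :
    (if y = D3.zero then (1:ℕ) else 0) =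
      (if x = D3.zero ∧ y = D3.zero then (1:ℕ) else 0)
      + (if ¬ x = D3.zero ∧ y = D3.zero then (1:ℕ) else 0) := by
  cases x <;> cases y <;> decide

lemma cnt_m (x y : D3) :
    (if D3.meet0 x y = D3.zero then (1:ℕ) else 0) =
      (if x = D3.zero ∧ y = D3.zero then (1:ℕ) else 0)
      + (if x = D3.zero ∧ ¬ y = D3.zero then (1:ℕ) else 0)
      + (if ¬ x = D3.zero ∧ y = D3.zero then (1:ℕ) else 0)
      + (if ¬ x = y ∧ ¬ x = D3.zero ∧ ¬ y = D3.zero then (1:ℕ) else 0) := by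
  cases x <;> cases y <;> decide

lemma cnt_j0 (x y : D3) :
    (if D3.join0 x y = D3.zero then (1:ℕ) else 0) =
      (if x = D3.zero ∧ y = D3.zero then (1:ℕ) else 0)
      + (if ¬ x = y ∧ ¬ x = D3.zero ∧ ¬ y = D3.zero then (1:ℕ) else 0) := by
  cases x <;> cases y <;> decide

lemma cnt_j1 (x y : D3) :
    (if D3.join1 x y = D3.zero then (1:ℕ) else 0) =
      (if x = D3.zero ∧ y = D3.zero then (1:ℕ) else 0) := by
  cases x <;> cases y <;> decide

end Helpers

lemma meet0_self' : ∀ x y : D3, D3.meet0 x y = y → y = x ∨ y = D3.zero := by decide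

lemma zsq_pos (α : ℝ) (hα0 : 0 < α) (hα1 : α ≤ 1) (s p q c : ℕ)
    (hqc : 1 ≤ q + c) (hpc : 1 ≤ p + c) :
    0 < ((s + p + q + c : ℕ) : ℝ) ^ 2 + α * ((s + c : ℕ) : ℝ) ^ 2
      + (1 - α) * ((s : ℕ) : ℝ) ^ 2 - ((s + p : ℕ) : ℝ) ^ 2 - ((s + q : ℕ) : ℝ) ^ 2 := by
  have hs0 : (0:ℝ) ≤ (s:ℝ) := Nat.cast_nonneg s
  have hp0 : (0:ℝ) ≤ (p:ℝ) := Nat.cast_nonneg p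
  have hq0 : (0:ℝ) ≤ (q:ℝ) := Nat.cast_nonneg q
  have hc0 : (0:ℝ) ≤ (c:ℝ) := Nat.cast_nonneg c
  push_cast
  rcases Nat.eq_zero_or_pos c with rfl | hc1
  · have hp1 : (1:ℝ) ≤ (p:ℝ) := by exact_mod_cast (by omega : 1 ≤ p)
    have hq1 : (1:ℝ) ≤ (q:ℝ) := by exact_mod_cast (by omega : 1 ≤ q)
    push_cast
    nlinarith [mul_le_mul hp1 hq1 zero_le_one (by linarith : (0:ℝ) ≤ (p:ℝ)),
      mul_nonneg hs0 hp0, mul_nonneg hs0 hq0]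
  · have hc1' : (1:ℝ) ≤ (c:ℝ) := by exact_mod_cast hc1
    nlinarith [mul_nonneg hs0 hc0, mul_nonneg hp0 hq0, mul_nonneg hp0 hc0,
      mul_nonneg hq0 hc0, mul_nonneg hα0.le (mul_nonneg hs0 hc0),
      mul_le_mul hc1' hc1' zero_le_one (by linarith : (0:ℝ) ≤ (c:ℝ)),
      mul_le_mul_of_nonneg_left
        (mul_le_mul hc1' hc1' zero_le_one (by linarith : (0:ℝ) ≤ (c:ℝ))) hα0.le]
/-- a minimizing distribution whose support is not a chain can be
improved to another minimizer with strictly larger `Σ λ(a) z(a)²`. -/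
theorem stmt14 (α : ℝ) (hα : α ∈ Set.Ioc (0 : ℝ) 1) (n : ℕ) (f : (Fin n → D3) → ℝ)
    (hf : AlphaBisub α n f) (x : Fin n → ℝ) (mu : (Fin n → D3) → ℝ)
    (h1 : IsDist n mu) (h2 : HasMarginal α n mu x)
    (hmin : ∀ lam : (Fin n → D3) → ℝ, IsDist n lam → HasMarginal α n lam x →
      ∑ a : Fin n → D3, mu a * f a ≤ ∑ a : Fin n → D3, lam a * f a)
    (hnc : ¬ ChainSupp n mu) :
    ∃ nu : (Fin n → D3) → ℝ, IsDist n nu ∧ HasMarginal α n nu x ∧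
      (∀ lam : (Fin n → D3) → ℝ, IsDist n lam → HasMarginal α n lam x →
        ∑ a : Fin n → D3, nu a * f a ≤ ∑ a : Fin n → D3, lam a * f a) ∧
      ∑ a : Fin n → D3, mu a * (zc a : ℝ) ^ 2 < ∑ a : Fin n → D3, nu a * (zc a : ℝ) ^ 2 := by
  obtain ⟨hα0, hα1⟩ := hα
  unfold ChainSupp at hnc
  push_neg at hnc
  obtain ⟨a, b, ha, hb, hab1, hab2⟩ := hnc
  have hne : a ≠ b := fun h => hab1 (le_of_eq h)
  set m := vmeet0 a b with hm
  set j0 := vjoin0 a b with hj0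
  set j1 := vjoin1 a b with hj1
  have hma : m ≠ a := by
    intro h; apply hab1; intro i
    exact meet0_self _ _ (congrFun h i)
  have hmb : m ≠ b := by
    intro h; apply hab2; intro i
    exact meet0_self' _ _ (congrFun h i)
  have hj0a : j0 ≠ a := by
    intro h; apply hab2; intro i
    exact join0_left _ _ (congrFun h i)
  have hj0b : j0 ≠ b := by
    intro h; apply hab1; intro i
    exact join0_right _ _ (congrFun h i)
  have hex1 : ∃ i, ¬ a i = b i ∧ ¬ a i = D3.zero := by
    rw [Pi.le_def] at hab1
    push_neg at hab1
    obtain ⟨i, hi⟩ := hab1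
    have hi' : ¬ (a i = b i ∨ a i = D3.zero) := hi
    push_neg at hi'
    exact ⟨i, hi'.1, hi'.2⟩
  have hex2 : ∃ i, ¬ a i = b i ∧ ¬ b i = D3.zero := by
    rw [Pi.le_def] at hab2
    push_neg at hab2
    obtain ⟨i, hi⟩ := hab2
    have hi' : ¬ (b i = a i ∨ b i = D3.zero) := hi
    push_neg at hi'
    exact ⟨i, fun h => hi'.1 h.symm, hi'.2⟩
  clear hab1 hab2
  set ε := min (mu a) (mu b) with hεdef
  have hεa : ε ≤ mu a := min_le_left _ _
  have hεb : ε ≤ mu b := min_le_right _ _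
  have hεpos : 0 < ε :=
    lt_min ((h1.1 a).1.lt_of_ne (Ne.symm ha)) ((h1.1 b).1.lt_of_ne (Ne.symm hb))
  set w : (Fin n → D3) → ℝ := fun c =>
    (if c = m then 1 else 0) + α * (if c = j0 then 1 else 0)
      + (1 - α) * (if c = j1 then 1 else 0) - (if c = a then 1 else 0)
      - (if c = b then 1 else 0) with hw
  set nu : (Fin n → D3) → ℝ := fun c => mu c + ε * w c with hnu
  have key : ∀ g : (Fin n → D3) → ℝ, ∑ c : Fin n → D3, nu c * g c
      = ∑ c : Fin n → D3, mu c * g c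
        + ε * (g m + α * g j0 + (1 - α) * g j1 - g a - g b) := by
    intro g
    have step : ∀ c : Fin n → D3, nu c * g c = mu c * g c
        + (ε * (if c = m then g c else 0) + (ε * α) * (if c = j0 then g c else 0)
          + (ε * (1 - α)) * (if c = j1 then g c else 0) - ε * (if c = a then g c else 0)
          - ε * (if c = b then g c else 0)) := by
      intro c
      simp only [hnu, hw, mul_ite, mul_one, mul_zero]
      split_ifs <;> ring
    rw [Finset.sum_congr rfl (fun c _ => step c)]
    rw [Finset.sum_add_distrib]
    congr 1
    simp only [Finset.sum_sub_distrib, Finset.sum_add_distrib, ← Finset.mul_sum,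
      Finset.sum_ite_eq', Finset.mem_univ, if_true]
    ring
  have hmass : ∑ c : Fin n → D3, nu c = 1 := by
    have h := key (fun _ => 1)
    simp only [mul_one] at h
    rw [h, h1.2]; ring
  have haw : -1 ≤ w a := by
    simp only [hw, if_neg (show ¬ a = m from fun h => hma h.symm),
      if_neg (show ¬ a = j0 from fun h => hj0a h.symm), if_neg hne, if_pos rfl]
    split_ifs <;> nlinarith
  have hbw : -1 ≤ w b := by
    simp only [hw, if_neg (show ¬ b = m from fun h => hmb h.symm),
      if_neg (show ¬ b = j0 from fun h => hj0b h.symm),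
      if_neg (show ¬ b = a from fun h => hne h.symm), if_pos rfl]
    split_ifs <;> nlinarith
  have hcw : ∀ c, ¬ c = a → ¬ c = b → 0 ≤ w c := by
    intro c hca hcb
    simp only [hw, if_neg hca, if_neg hcb]
    split_ifs <;> nlinarith
  have hnn : ∀ c, 0 ≤ nu c := by
    intro c
    simp only [hnu]
    by_cases hca : c = a
    · rw [hca]
      linarith [mul_le_mul_of_nonneg_left haw hεpos.le, hεa]
    · by_cases hcb : c = b
      · rw [hcb]
        linarith [mul_le_mul_of_nonneg_left hbw hεpos.le, hεb]
      · linarith [(h1.1 c).1, mul_nonneg hεpos.le (hcw c hca hcb)]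
  have hle1 : ∀ c, nu c ≤ 1 := by
    intro c
    rw [← hmass]
    exact Finset.single_le_sum (fun d _ => hnn d) (Finset.mem_univ c)
  have hdist : IsDist n nu := ⟨fun c => ⟨hnn c, hle1 c⟩, hmass⟩
  have hmarg : HasMarginal α n nu x := by
    intro i
    have h := key (fun c => D3.emb α (c i))
    rw [h, h2 i]
    have hz := emb_id α (a i) (b i)
    have e1 : m i = D3.meet0 (a i) (b i) := rfl
    have e2 : j0 i = D3.join0 (a i) (b i) := rfl
    have e3 : j1 i = D3.join1 (a i) (b i) := rfl
    rw [e1, e2, e3]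
    have hz0 : D3.emb α (D3.meet0 (a i) (b i)) + α * D3.emb α (D3.join0 (a i) (b i))
        + (1 - α) * D3.emb α (D3.join1 (a i) (b i)) - D3.emb α (a i) - D3.emb α (b i) = 0 := by
      linarith
    rw [hz0, mul_zero, add_zero]
  have hcost : ∑ c : Fin n → D3, nu c * f c ≤ ∑ c : Fin n → D3, mu c * f c := by
    rw [key f]
    have hb2 := hf a b
    rw [← hm, ← hj0, ← hj1] at hb2
    nlinarith [mul_le_mul_of_nonneg_left (show f m + α * f j0 + (1-α) * f j1 - f a - f b ≤ 0 by linarith) hεpos.le]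
  refine ⟨nu, hdist, hmarg, fun lam hl1 hl2 => le_trans hcost (hmin lam hl1 hl2), ?_⟩
  -- strict increase of ∑ ν z²
  have h := key (fun c => (zc c : ℝ) ^ 2)
  rw [h]
  have hZ : 0 < (zc m : ℝ) ^ 2 + α * (zc j0 : ℝ) ^ 2 + (1 - α) * (zc j1 : ℝ) ^ 2
      - (zc a : ℝ) ^ 2 - (zc b : ℝ) ^ 2 := by
    set S := Finset.univ.filter (fun i => a i = D3.zero ∧ b i = D3.zero) with hS
    set P := Finset.univ.filter (fun i => a i = D3.zero ∧ ¬ b i = D3.zero) with hP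
    set Q := Finset.univ.filter (fun i => ¬ a i = D3.zero ∧ b i = D3.zero) with hQ
    set C := Finset.univ.filter
      (fun i => ¬ a i = b i ∧ ¬ a i = D3.zero ∧ ¬ b i = D3.zero) with hC
    have hza : zc a = S.card + P.card := by
      rw [zc, hS, hP, Finset.card_filter, Finset.card_filter, Finset.card_filter,
        ← Finset.sum_add_distrib]
      exact Finset.sum_congr rfl fun i _ => cnt_a (a i) (b i)
    have hzb : zc b = S.card + Q.card := by
      rw [zc, hS, hQ, Finset.card_filter, Finset.card_filter, Finset.card_filter,
        ← Finset.sum_add_distrib]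
      exact Finset.sum_congr rfl fun i _ => cnt_b (a i) (b i)
    have hzm : zc m = S.card + P.card + Q.card + C.card := by
      rw [zc, hS, hP, hQ, hC, Finset.card_filter, Finset.card_filter, Finset.card_filter,
        Finset.card_filter, Finset.card_filter, ← Finset.sum_add_distrib,
        ← Finset.sum_add_distrib, ← Finset.sum_add_distrib]
      exact Finset.sum_congr rfl fun i _ => cnt_m (a i) (b i)
    have hzj0 : zc j0 = S.card + C.card := by
      rw [zc, hS, hC, Finset.card_filter, Finset.card_filter, Finset.card_filter,
        ← Finset.sum_add_distrib]
      exact Finset.sum_congr rfl fun i _ => cnt_j0 (a i) (b i)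
    have hzj1 : zc j1 = S.card := by
      rw [zc, hS, Finset.card_filter, Finset.card_filter]
      exact Finset.sum_congr rfl fun i _ => cnt_j1 (a i) (b i)
    have hqc : 1 ≤ Q.card + C.card := by
      obtain ⟨i, hi1, hi2⟩ := hex1
      by_cases hbz : b i = D3.zero
      · have : 1 ≤ Q.card := Finset.card_pos.mpr
          ⟨i, Finset.mem_filter.mpr ⟨Finset.mem_univ i, hi2, hbz⟩⟩
        omega
      · have : 1 ≤ C.card := Finset.card_pos.mpr
          ⟨i, Finset.mem_filter.mpr ⟨Finset.mem_univ i, hi1, hi2, hbz⟩⟩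
        omega
    have hpc : 1 ≤ P.card + C.card := by
      obtain ⟨i, hi1, hi2⟩ := hex2
      by_cases haz : a i = D3.zero
      · have : 1 ≤ P.card := Finset.card_pos.mpr
          ⟨i, Finset.mem_filter.mpr ⟨Finset.mem_univ i, haz, hi2⟩⟩
        omega
      · have : 1 ≤ C.card := Finset.card_pos.mpr
          ⟨i, Finset.mem_filter.mpr ⟨Finset.mem_univ i, hi1, haz, hi2⟩⟩
        omega
    rw [hza, hzb, hzm, hzj0, hzj1]
    exact zsq_pos α hα0 hα1 S.card P.card Q.card C.card hqc hpc
  nlinarith [mul_pos hεpos hZ]
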